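/- Under the same assumptions, λ_min(H) ≤ (d+1)/2 · (1 − (1 − θ_min/π) cos θ_min), where θ_min ∈ (0,π) is defined by cos θ_min = max_{i≠j} x_i^T x_j/(d+1). -/

import Mathlib

/-- Upper bound on the smallest eigenvalue of the NTK Gram matrix: there is a unit
vector `u` with `u^T H u ≤ (d+1)/2 · (1 − (1 − θ_min/π) cos θ_min)`, where
`θ_min ∈ (0,π)` satisfies `cos θ_min = max_{i≠j} x_i^T x_j/(d+1)`. -/
theorem ntk_gram_lambda_min_upper (d n : ℕ) (hd : 1 ≤ d)
    (x : Fin n → EuclideanSpace ℝ (Fin (d + 1)))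
    (hnorm : ∀ i, ‖x i‖ = Real.sqrt ((d : ℝ) + 1))
    (hpar : ∀ i j, i ≠ j → ∀ t : ℝ, x i ≠ t • x j)
    (H : Matrix (Fin n) (Fin n) ℝ)
    (hH : ∀ i j, H i j = (inner ℝ (x i) (x j) : ℝ) *
        (Real.pi - Real.arccos ((inner ℝ (x i) (x j) : ℝ) / ((d : ℝ) + 1))) / (2 * Real.pi))
    (θ : ℝ) (hθ : θ ∈ Set.Ioo 0 Real.pi)
    (hub : ∀ i j, i ≠ j → (inner ℝ (x i) (x j) : ℝ) / ((d : ℝ) + 1) ≤ Real.cos θ)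
    (hach : ∃ i j, i ≠ j ∧ (inner ℝ (x i) (x j) : ℝ) / ((d : ℝ) + 1) = Real.cos θ) :
    ∃ u : Fin n → ℝ, (∑ i, (u i) ^ 2) = 1 ∧
      dotProduct u (H.mulVec u)
        ≤ ((d : ℝ) + 1) / 2 * (1 - (1 - θ / Real.pi) * Real.cos θ) := by
  obtain ⟨a, b, hab, hcos⟩ := hach
  have hd1 : (0 : ℝ) < (d : ℝ) + 1 := by positivity
  have hπ : (0 : ℝ) < Real.pi := Real.pi_pos
  set c : ℝ := (Real.sqrt 2)⁻¹ with hc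
  have hc2 : c ^ 2 = 1 / 2 := by
    rw [hc, inv_pow, Real.sq_sqrt (by norm_num : (2:ℝ) ≥ 0)]
    norm_num
  refine ⟨fun i => if i = a then c else if i = b then -c else 0, ?_, ?_⟩
  · have h1 : ∀ i : Fin n, (if i = a then c else if i = b then -c else 0) ^ 2
        = (if i = a then c ^ 2 else 0) + (if i = b then c ^ 2 else 0) := by
      intro i
      by_cases h1 : i = a
      · subst h1; simp [if_neg (fun h => hab h)]
      · by_cases h2 : i = b <;> simp [h1, h2, Ne.symm hab]
    simp only [h1, Finset.sum_add_distrib, Finset.sum_ite_eq',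
      Finset.mem_univ, if_true, hc2]
    norm_num
  · have hinner_self : ∀ i : Fin n, (inner ℝ (x i) (x i) : ℝ) = (d : ℝ) + 1 := by
      intro i
      rw [real_inner_self_eq_norm_sq, hnorm, Real.sq_sqrt hd1.le]
    have hdiag : ∀ i : Fin n, H i i = ((d : ℝ) + 1) / 2 := by
      intro i
      rw [hH, hinner_self, div_self hd1.ne', Real.arccos_one]
      field_simp
      ring
    have hsym : (inner ℝ (x b) (x a) : ℝ) = inner ℝ (x a) (x b) := real_inner_comm _ _
    have hiab : (inner ℝ (x a) (x b) : ℝ) = ((d : ℝ) + 1) * Real.cos θ := by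
      rw [div_eq_iff hd1.ne'] at hcos; linarith [hcos]
    have harc : Real.arccos ((inner ℝ (x a) (x b) : ℝ) / ((d : ℝ) + 1)) = θ := by
      rw [hcos, Real.arccos_cos hθ.1.le hθ.2.le]
    have hHab : H a b = ((d : ℝ) + 1) * Real.cos θ * (Real.pi - θ) / (2 * Real.pi) := by
      rw [hH, harc, hiab]
    have hHba : H b a = ((d : ℝ) + 1) * Real.cos θ * (Real.pi - θ) / (2 * Real.pi) := by
      rw [hH, hsym, harc, hiab]
    have hu : ∀ j : Fin n, (if j = a then c else if j = b then -c else 0)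
        = (if j = a then c else 0) + (if j = b then -c else 0) := by
      intro j
      by_cases h1 : j = a
      · subst h1; simp [if_neg (fun h => hab h)]
      · by_cases h2 : j = b <;> simp [h1, h2, Ne.symm hab]
    have hmv : ∀ i : Fin n, H.mulVec (fun j => if j = a then c else if j = b then -c else 0) i
        = H i a * c - H i b * c := by
      intro i
      simp only [Matrix.mulVec, dotProduct, hu, mul_add, Finset.sum_add_distrib,
        mul_ite, mul_zero, mul_neg, Finset.sum_ite_eq', Finset.mem_univ, if_true]
      ring
    have key : dotProduct (fun i => if i = a then c else if i = b then -c else 0)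
        (H.mulVec (fun j => if j = a then c else if j = b then -c else 0))
        = ((d : ℝ) + 1) / 2 * (1 - (1 - θ / Real.pi) * Real.cos θ) := by
      simp only [dotProduct]
      have hterm : ∀ i : Fin n, (if i = a then c else if i = b then -c else 0) *
          (H.mulVec (fun j => if j = a then c else if j = b then -c else 0)) i
          = (if i = a then c * (H a a * c - H a b * c) else 0)
            + (if i = b then -c * (H b a * c - H b b * c) else 0) := by
        intro i
        rw [hmv]
        by_cases h1 : i = a
        · subst h1; simp [if_neg (fun h => hab h)]
        · by_cases h2 : i = b
          · subst h2; simp [h1]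
          · simp [h1, h2]
      rw [Finset.sum_congr rfl (fun i _ => hterm i)]
      simp only [Finset.sum_add_distrib, Finset.sum_ite_eq', Finset.mem_univ, if_true]
      have hK : ((d : ℝ) + 1) * Real.cos θ * (Real.pi - θ) / (2 * Real.pi)
          = ((d : ℝ) + 1) / 2 * ((1 - θ / Real.pi) * Real.cos θ) := by
        field_simp
      rw [hdiag a, hdiag b, hHab, hHba, hK]
      have hcc : c * c = 1 / 2 := by rw [← sq]; exact hc2
      linear_combination (((d : ℝ) + 1) - ((d : ℝ) + 1) * ((1 - θ / Real.pi) * Real.cos θ)) * hcc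
    rw [key]
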